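/- Let L be a finite-dimensional Leibniz algebra over ℂ and D a derivation of L. Write D = D₀ + N for the Jordan–Chevalley decomposition of the linear operator D, where D₀ is diagonalizable, N is nilpotent, and D₀N = ND₀. Then the diagonalizable part D₀ is itself a derivation of L. -/

import Mathlib

/-- A linear endomorphism is diagonalizable if its eigenspaces span the whole space,
i.e. the space admits a basis of eigenvectors. -/
def IsDiagonalizable {L : Type*} [AddCommGroup L] [Module ℂ L]
    (f : Module.End ℂ L) : Prop :=
  (⨆ μ : ℂ, f.eigenspace μ) = ⊤

section Aux

variable {L : Type*} [AddCommGroup L] [Module ℂ L]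

/-- Binomial-type lemma: a derivation maps products of generalized eigenvectors to
generalized eigenvectors of the sum of eigenvalues. -/
lemma deriv_pow_prod_eq_zero (b : L →ₗ[ℂ] L →ₗ[ℂ] L) (D : Module.End ℂ L)
    (hD : ∀ x y : L, D (b x y) = b (D x) y + b x (D y)) (μ ν : ℂ) {x y : L} {p q : ℕ}
    (hx : ((D - μ • 1) ^ p) x = 0) (hy : ((D - ν • 1) ^ q) y = 0) :
    ((D - (μ + ν) • 1) ^ (p + q)) (b x y) = 0 := by
  set A : Module.End ℂ L := D - μ • 1 with hA
  set B : Module.End ℂ L := D - ν • 1 with hB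
  set F : Module.End ℂ L := D - (μ + ν) • 1 with hF
  have hFb : ∀ u v : L, F (b u v) = b (A u) v + b u (B v) := by
    intro u v
    simp only [hF, hA, hB, LinearMap.sub_apply, LinearMap.smul_apply, Module.End.one_apply,
      LinearMap.add_apply, map_sub, map_smul, hD u v, add_smul]
    module
  have main : ∀ n : ℕ, (F ^ n) (b x y) ∈
      Submodule.span ℂ {z : L | ∃ i j : ℕ, i + j = n ∧ z = b ((A ^ i) x) ((B ^ j) y)} := by
    intro n
    induction n with
    | zero =>
      apply Submodule.subset_span
      exact ⟨0, 0, rfl, by simp⟩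
    | succ n ih =>
      have hstep : (F ^ (n + 1)) (b x y) = F ((F ^ n) (b x y)) := by
        rw [pow_succ']; rfl
      rw [hstep]
      refine Submodule.span_induction (p := fun z _ => F z ∈
        Submodule.span ℂ {z : L | ∃ i j : ℕ, i + j = n + 1 ∧ z = b ((A ^ i) x) ((B ^ j) y)})
        ?_ ?_ ?_ ?_ ih
      · rintro z ⟨i, j, hij, rfl⟩
        rw [hFb]
        refine Submodule.add_mem _ (Submodule.subset_span ?_) (Submodule.subset_span ?_)
        · exact ⟨i + 1, j, by omega, by rw [pow_succ']; rfl⟩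
        · exact ⟨i, j + 1, by omega, by rw [pow_succ' B j]; rfl⟩
      · simp
      · intro u v _ _ hu hv
        rw [map_add]; exact Submodule.add_mem _ hu hv
      · intro c u _ hu
        rw [map_smul]; exact Submodule.smul_mem _ c hu
  have hzero : Submodule.span ℂ
      {z : L | ∃ i j : ℕ, i + j = p + q ∧ z = b ((A ^ i) x) ((B ^ j) y)} ≤ ⊥ := by
    rw [Submodule.span_le]
    rintro z ⟨i, j, hij, rfl⟩
    have : p ≤ i ∨ q ≤ j := by omega
    rcases this with h | h
    · have : (A ^ i) x = 0 := Module.End.pow_map_zero_of_le h hx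
      simp [this]
    · have : (B ^ j) y = 0 := Module.End.pow_map_zero_of_le h hy
      simp [this]
  have := hzero (main (p + q))
  simpa using this

/-- An eigenvector of `D₀` is a generalized eigenvector of `D₀ + N` for commuting nilpotent `N`. -/
lemma eigen_mem_maxGen (D₀ N : Module.End ℂ L) (hcomm : Commute D₀ N)
    (hnil : IsNilpotent N) (μ : ℂ) {x : L} (hx : D₀ x = μ • x) :
    ∃ k : ℕ, (((D₀ + N) - μ • 1) ^ k) x = 0 := by
  set S : Module.End ℂ L := D₀ - μ • 1 with hS
  have hSx : S x = 0 := by simp [hS, LinearMap.sub_apply, hx]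
  have hSN : Commute S N := by
    have h1 : Commute ((μ : ℂ) • (1 : Module.End ℂ L)) N :=
      (Commute.one_left N).smul_left μ
    exact hcomm.sub_left h1
  have key : ∀ (k : ℕ) (z : L), S z = 0 → ((S + N) ^ k) z = (N ^ k) z ∧ S ((N ^ k) z) = 0 := by
    intro k
    induction k with
    | zero => intro z hz; simpa using hz
    | succ k ih =>
      intro z hz
      have hNz : S (N z) = 0 := by
        have : S (N z) = N (S z) := by
          have := hSN.eq
          calc S (N z) = (S * N) z := rfl
            _ = (N * S) z := by rw [this]
            _ = N (S z) := rfl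
        rw [this, hz, map_zero]
      have hSNz : (S + N) z = N z := by
        simp [LinearMap.add_apply, hz]
      obtain ⟨h1, h2⟩ := ih (N z) hNz
      constructor
      · have : ((S + N) ^ (k + 1)) z = ((S + N) ^ k) ((S + N) z) := by
          rw [pow_succ]; rfl
        rw [this, hSNz, h1]
        rw [pow_succ]; rfl
      · have : (N ^ (k + 1)) z = (N ^ k) (N z) := by rw [pow_succ]; rfl
        rw [this]; exact h2
  obtain ⟨k, hk⟩ := hnil
  refine ⟨k, ?_⟩
  have : (D₀ + N) - μ • 1 = S + N := by rw [hS]; abel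
  rw [this, (key k x hSx).1, hk]
  rfl

end Aux

/-- Let `L` be a finite-dimensional Leibniz algebra over ℂ and `D` a derivation.
If `D = D₀ + N` is the Jordan–Chevalley decomposition of `D` (`D₀` diagonalizable, `N`
nilpotent, `D₀N = ND₀`), then `D₀` is itself a derivation of `L`. -/
theorem leibniz_jordan_chevalley_diag_part_is_derivation
    {L : Type*} [AddCommGroup L] [Module ℂ L] [FiniteDimensional ℂ L]
    (b : L →ₗ[ℂ] L →ₗ[ℂ] L)
    (leib : ∀ x y z : L, b (b x y) z = b (b x z) y + b x (b y z))
    (D : Module.End ℂ L)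
    (hD : ∀ x y : L, D (b x y) = b (D x) y + b x (D y))
    (D₀ N : Module.End ℂ L)
    (hdiag : IsDiagonalizable D₀)
    (hnil : IsNilpotent N)
    (hcomm : Commute D₀ N)
    (hsum : D = D₀ + N) :
    ∀ x y : L, D₀ (b x y) = b (D₀ x) y + b x (D₀ y) := by
  -- eigenspaces of D₀ sit inside generalized eigenspaces of D
  have hle : ∀ μ : ℂ, D₀.eigenspace μ ≤ D.maxGenEigenspace μ := by
    intro μ x hx
    rw [Module.End.mem_eigenspace_iff] at hx
    rw [Module.End.mem_maxGenEigenspace]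
    obtain ⟨k, hk⟩ := eigen_mem_maxGen D₀ N hcomm hnil μ hx
    exact ⟨k, by rw [hsum]; exact hk⟩
  -- D₀ acts as the scalar μ on the generalized eigenspace of D for μ
  have hscal : ∀ (μ : ℂ) (z : L), z ∈ D.maxGenEigenspace μ → D₀ z = μ • z := by
    intro μ z hz
    have hind := D.independent_maxGenEigenspace
    have htop : D₀.eigenspace μ ⊔ (⨆ ν : ℂ, ⨆ _ : ν ≠ μ, D.maxGenEigenspace ν) = ⊤ := by
      rw [eq_top_iff, ← hdiag]
      refine iSup_le fun ν => ?_
      by_cases h : ν = μ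
      · subst h; exact le_sup_left
      · exact le_trans (hle ν) (le_trans (le_iSup₂ (f := fun ν _ => D.maxGenEigenspace ν) ν h)
          le_sup_right)
    have hz' : z ∈ D₀.eigenspace μ ⊔ (⨆ ν : ℂ, ⨆ _ : ν ≠ μ, D.maxGenEigenspace ν) := by
      rw [htop]; trivial
    obtain ⟨a, ha, r, hr, hzar⟩ := Submodule.mem_sup.mp hz'
    have hr' : r ∈ D.maxGenEigenspace μ := by
      have haM : a ∈ D.maxGenEigenspace μ := hle μ ha
      have : r = z - a := by rw [← hzar]; abel
      rw [this]; exact Submodule.sub_mem _ hz haM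
    have hr0 : r = 0 := Submodule.disjoint_def.mp (hind μ) r hr' hr
    have : z = a := by rw [← hzar, hr0, add_zero]
    rw [this] at *
    exact Module.End.mem_eigenspace_iff.mp ha
  -- the identity on pairs of eigenvectors of D₀
  have key : ∀ (μ ν : ℂ) (x : L), x ∈ D₀.eigenspace μ → ∀ y : L, y ∈ D₀.eigenspace ν →
      D₀ (b x y) = b (D₀ x) y + b x (D₀ y) := by
    intro μ ν x hx y hy
    have hx' := Module.End.mem_eigenspace_iff.mp hx
    have hy' := Module.End.mem_eigenspace_iff.mp hy
    obtain ⟨p, hp⟩ := Module.End.mem_maxGenEigenspace _ _ _ |>.mp (hle μ hx)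
    obtain ⟨q, hq⟩ := Module.End.mem_maxGenEigenspace _ _ _ |>.mp (hle ν hy)
    have hmem : b x y ∈ D.maxGenEigenspace (μ + ν) := by
      rw [Module.End.mem_maxGenEigenspace]
      exact ⟨p + q, deriv_pow_prod_eq_zero b D hD μ ν hp hq⟩
    have := hscal (μ + ν) (b x y) hmem
    rw [this, hx', hy']
    simp [add_smul]
  -- assemble by bilinearity
  intro x
  have hx : x ∈ ⨆ μ : ℂ, D₀.eigenspace μ := by rw [hdiag]; trivial
  refine Submodule.iSup_induction _ (motive := fun x => ∀ y : L,
      D₀ (b x y) = b (D₀ x) y + b x (D₀ y)) hx ?_ ?_ ?_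
  · intro μ x hx
    have hy' : ∀ y : L, y ∈ ⨆ ν : ℂ, D₀.eigenspace ν := fun y => by rw [hdiag]; trivial
    intro y
    refine Submodule.iSup_induction _ (motive := fun y =>
        D₀ (b x y) = b (D₀ x) y + b x (D₀ y)) (hy' y) ?_ ?_ ?_
    · intro ν y hy; exact key μ ν x hx y hy
    · simp
    · intro u v hu hv; simp only [map_add, hu, hv]; abel
  · intro y; simp
  · intro u v hu hv y
    simp only [map_add, LinearMap.add_apply, hu y, hv y]
    abel
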